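/- Let λ, p₀, h ∈ ℝ and let P(x) = −¼x⁴ − (2p₀²−h)x² + 2λp₀²x + 1 − (p₀²−h)² − p₀²λ². Let r : I → ℝ be a twice differentiable function on an open interval I with r′(t)² = P(r(t)) and r″(t) = ½P′(r(t)) for all t ∈ I. Then the curve t ↦ (ω₁,ω₂,ω₃,α₁,α₂,α₃)(t) = (p₀, 0, r(t), p₀² + ½r(t)² − h, r′(t), −p₀(r(t)−λ)) is an integral curve of the vector field X, i.e. the derivative of the curve equals X evaluated along the curve. -/

import Mathlib

/-- The Kowalevski–Yehia gyrostat vector field on ℝ⁶ = {(ω₁,ω₂,ω₃,α₁,α₂,α₃)}. -/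
noncomputable def KY (lam : ℝ) (v : Fin 6 → ℝ) : Fin 6 → ℝ :=
  ![ (1/2) * v 1 * (v 2 - lam),
     (1/2) * (-(v 0) * (v 2 - lam) - v 5),
     v 4,
     v 4 * v 2 - v 5 * v 1,
     v 5 * v 0 - v 3 * v 2,
     v 3 * v 1 - v 4 * v 0 ]

/-- the Kharlamov partial solution is an integral curve of the
Kowalevski–Yehia field. -/
theorem kharlamov_solution_is_integral_curve
    (lam p₀ h : ℝ)
    (P : ℝ → ℝ)
    (hP : P = fun x => -(1/4)*x^4 - (2*p₀^2 - h)*x^2 + 2*lam*p₀^2*x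
        + 1 - (p₀^2 - h)^2 - p₀^2*lam^2)
    (I : Set ℝ) (hI : IsOpen I)
    (r r' r'' : ℝ → ℝ)
    (hr : ∀ t ∈ I, HasDerivAt r (r' t) t)
    (hr' : ∀ t ∈ I, HasDerivAt r' (r'' t) t)
    (hsq : ∀ t ∈ I, (r' t)^2 = P (r t))
    (hacc : ∀ t ∈ I, r'' t = (1/2) * deriv P (r t))
    (curve : ℝ → Fin 6 → ℝ)
    (hcurve : curve = fun t =>
      ![p₀, 0, r t, p₀^2 + (1/2)*(r t)^2 - h, r' t, -p₀*(r t - lam)]) :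
    ∀ t ∈ I, HasDerivAt curve (KY lam (curve t)) t := by
  intro t ht
  have hPd : ∀ x : ℝ, deriv P x = -x^3 - 2*(2*p₀^2 - h)*x + 2*lam*p₀^2 := by
    intro x
    have : HasDerivAt P (-x^3 - 2*(2*p₀^2 - h)*x + 2*lam*p₀^2) x := by
      rw [hP]
      have h1 : HasDerivAt (fun x : ℝ => -(1/4)*x^4 - (2*p₀^2 - h)*x^2 + 2*lam*p₀^2*x
          + 1 - (p₀^2 - h)^2 - p₀^2*lam^2)
          (-(1/4)*(4*x^3) - (2*p₀^2 - h)*(2*x) + 2*lam*p₀^2*1) x := by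
        have hx := hasDerivAt_id x
        have h4 : HasDerivAt (fun x : ℝ => x^4) (4*x^3) x := by
          simpa using hasDerivAt_pow 4 x
        have h2 : HasDerivAt (fun x : ℝ => x^2) (2*x) x := by
          simpa using hasDerivAt_pow 2 x
        exact ((((h4.const_mul (-(1/4))).sub (h2.const_mul (2*p₀^2 - h))).add
          (hx.const_mul (2*lam*p₀^2))).add_const 1).sub_const ((p₀^2 - h)^2) |>.sub_const
          (p₀^2*lam^2)
      convert h1 using 1
      ring
    rw [this.deriv]
  rw [hcurve]
  rw [hasDerivAt_pi]
  intro i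
  have hrt := hr t ht
  have hrt' := hr' t ht
  have hacc' := hacc t ht
  rw [hPd] at hacc'
  have e5 : ∀ (a b c d e f : ℝ), (![a,b,c,d,e,f] : Fin 6 → ℝ) 5 = f := fun _ _ _ _ _ _ => rfl
  fin_cases i <;> simp [KY, e5]
  · exact hasDerivAt_const t p₀
  · exact hasDerivAt_const t 0
  · exact hrt
  · have h2 := ((hrt.pow 2).const_mul ((2:ℝ)⁻¹))
    exact h2.congr_deriv (by norm_num; ring)
  · refine hrt'.congr_deriv ?_
    rw [hacc']; ring
  · have h5 := ((hrt.sub_const lam).const_mul p₀).neg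
    exact h5.congr_deriv (by ring)
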